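/- The hull mapping on 𝒦′(ℂⁿ) is measurable: there exists a Borel measurable map H : 𝒦′(ℂⁿ) → 𝒦′(ℂⁿ) such that for every nonempty compact set K ⊆ ℂⁿ, the set H(K) equals the polynomially convex hull K̂ of K. -/

import Mathlib

open TopologicalSpace MvPolynomial Metric Filter Topology

namespace PolyHullAux

lemma real_le_of_forall_pos_le_add {a b : ℝ} (h : ∀ ε : ℝ, 0 < ε → a ≤ b + ε) : a ≤ b := by
  by_contra hc
  push_neg at hc
  have := h ((a - b) / 2) (by linarith)
  linarith

section Criterion

variable {E : Type*} [MetricSpace E]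

lemma abs_infDist_sub_le {A B : Set E} (hA : A.Nonempty) (hB : B.Nonempty)
    (hAb : Bornology.IsBounded A) (hBb : Bornology.IsBounded B) (x : E) :
    |infDist x A - infDist x B| ≤ hausdorffDist A B := by
  have fin : EMetric.hausdorffEdist A B ≠ ⊤ :=
    hausdorffEdist_ne_top_of_nonempty_of_bounded hA hB hAb hBb
  have fin' : EMetric.hausdorffEdist B A ≠ ⊤ :=
    hausdorffEdist_ne_top_of_nonempty_of_bounded hB hA hBb hAb
  have h1 : infDist x A ≤ infDist x B + hausdorffDist B A :=
    infDist_le_infDist_add_hausdorffDist fin'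
  have h2 : infDist x B ≤ infDist x A + hausdorffDist A B :=
    infDist_le_infDist_add_hausdorffDist fin
  rw [hausdorffDist_comm] at h1
  rw [abs_le]
  constructor <;> linarith

variable [SecondCountableTopology E]

theorem measurable_of_infDist {Ω : Type*} [MeasurableSpace Ω]
    [MeasurableSpace (NonemptyCompacts E)] [BorelSpace (NonemptyCompacts E)]
    {F : Ω → NonemptyCompacts E}
    (h : ∀ z : E, Measurable fun ω => infDist z (F ω : Set E)) :
    Measurable F := by
  obtain ⟨D, hDc, hDd⟩ := exists_countable_dense E
  have key : ∀ (C : NonemptyCompacts E) (r : ℝ), MeasurableSet {ω | dist (F ω) C < r} := by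
    intro C r
    have heq : {ω | dist (F ω) C < r} =
        ⋃ q ∈ {q : ℚ | 0 ≤ (q : ℝ) ∧ (q : ℝ) < r},
          ⋂ x ∈ D,
            {ω | |infDist x (F ω : Set E) - infDist x (C : Set E)| ≤ (q : ℝ)} := by
      ext ω
      simp only [Set.mem_setOf_eq, Set.mem_iUnion, Set.mem_iInter, exists_prop]
      constructor
      · intro hω
        obtain ⟨q, hq1, hq2⟩ := exists_rat_btwn hω
        refine ⟨q, ⟨le_of_lt (lt_of_le_of_lt dist_nonneg hq1), hq2⟩, fun x _ => ?_⟩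
        refine le_trans (abs_infDist_sub_le (F ω).nonempty C.nonempty
          (F ω).isCompact.isBounded C.isCompact.isBounded x) ?_
        rw [NonemptyCompacts.dist_eq] at hq1
        exact hq1.le
      · rintro ⟨q, ⟨hq0, hqr⟩, hall⟩
        have hclosed : IsClosed {x : E |
            |infDist x (F ω : Set E) - infDist x (C : Set E)| ≤ (q : ℝ)} :=
          isClosed_le (((continuous_infDist_pt _).sub (continuous_infDist_pt _)).abs)
            continuous_const
        have hx : ∀ x : E, |infDist x (F ω : Set E) - infDist x (C : Set E)| ≤ (q : ℝ) := by
          intro x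
          have hsub : D ⊆ {x : E |
              |infDist x (F ω : Set E) - infDist x (C : Set E)| ≤ (q : ℝ)} :=
            fun y hy => hall y hy
          have := hclosed.closure_subset_iff.mpr hsub
          rw [hDd.closure_eq] at this
          exact this (Set.mem_univ x)
        have hd : hausdorffDist (F ω : Set E) (C : Set E) ≤ (q : ℝ) := by
          apply hausdorffDist_le_of_infDist hq0
          · intro x hxA
            have := hx x
            rw [infDist_zero_of_mem hxA, zero_sub, abs_neg,
              abs_of_nonneg infDist_nonneg] at this
            exact this
          · intro x hxC
            have := hx x
            rw [infDist_zero_of_mem hxC, sub_zero,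
              abs_of_nonneg infDist_nonneg] at this
            exact this
        calc dist (F ω) C = hausdorffDist (F ω : Set E) (C : Set E) :=
              NonemptyCompacts.dist_eq
          _ ≤ (q : ℝ) := hd
          _ < r := hqr
    rw [heq]
    refine MeasurableSet.biUnion (Set.to_countable _) fun q _ => ?_
    refine MeasurableSet.biInter hDc fun x _ => ?_
    exact measurableSet_le (((h x).sub measurable_const).abs) measurable_const
  refine measurable_of_isOpen fun U hU => ?_
  obtain ⟨𝒟, h𝒟c, h𝒟d⟩ := exists_countable_dense (NonemptyCompacts E)
  have heq : F ⁻¹' U = ⋃ p ∈ {p : NonemptyCompacts E × ℚ | p.1 ∈ 𝒟 ∧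
      Metric.ball p.1 (p.2 : ℝ) ⊆ U}, {ω | dist (F ω) p.1 < (p.2 : ℝ)} := by
    ext ω
    simp only [Set.mem_preimage]
    rw [Set.mem_iUnion₂]
    constructor
    · intro hω
      obtain ⟨ε, hε, hball⟩ := Metric.isOpen_iff.1 hU _ hω
      obtain ⟨C, hC𝒟, hCd⟩ := Metric.mem_closure_iff.1 (h𝒟d (F ω)) (ε / 3) (by linarith)
      obtain ⟨q, hq1, hq2⟩ := exists_rat_btwn (show ε / 3 < 2 * ε / 3 by linarith)
      refine ⟨(C, q), ⟨hC𝒟, fun y hy => ?_⟩, show dist (F ω) C < (q : ℝ) from lt_trans hCd hq1⟩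
      apply hball
      rw [Metric.mem_ball] at hy ⊢
      calc dist y (F ω) ≤ dist y C + dist C (F ω) := dist_triangle _ _ _
        _ < (q : ℝ) + ε / 3 := by
            rw [dist_comm C (F ω)]; exact add_lt_add hy hCd
        _ < 2 * ε / 3 + ε / 3 := by linarith
        _ = ε := by ring
    · rintro ⟨p, ⟨-, hsub⟩, hd⟩
      exact hsub (Metric.mem_ball.2 (by exact hd))
  rw [heq]
  refine MeasurableSet.biUnion ?_ fun p _ => key p.1 p.2
  refine Set.Countable.mono ?_ (h𝒟c.prod (Set.to_countable (Set.univ : Set ℚ)))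
  intro p hp
  exact ⟨hp.1, Set.mem_univ _⟩

end Criterion

section Hull

variable {n : ℕ}

def hullSet (K : NonemptyCompacts (Fin n → ℂ)) : Set (Fin n → ℂ) :=
  {z : Fin n → ℂ | ∀ p : MvPolynomial (Fin n) ℂ,
    ‖eval z p‖ ≤ ⨆ x : (K : Set (Fin n → ℂ)), ‖eval (x : Fin n → ℂ) p‖}

lemma bddAbove_aux (K : NonemptyCompacts (Fin n → ℂ)) (f : (Fin n → ℂ) → ℝ)
    (hf : Continuous f) :
    BddAbove (Set.range fun x : (K : Set (Fin n → ℂ)) => f x) := by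
  rw [← Set.image_eq_range]
  exact (K.isCompact.image hf).bddAbove

lemma subset_hull (K : NonemptyCompacts (Fin n → ℂ)) :
    (K : Set (Fin n → ℂ)) ⊆ hullSet K := by
  intro x hx p
  exact le_ciSup (bddAbove_aux K _ ((MvPolynomial.continuous_eval p).norm)) ⟨x, hx⟩

lemma hull_nonempty (K : NonemptyCompacts (Fin n → ℂ)) : (hullSet K).Nonempty := by
  obtain ⟨x, hx⟩ := K.nonempty
  exact ⟨x, subset_hull K hx⟩

lemma isClosed_hull (K : NonemptyCompacts (Fin n → ℂ)) : IsClosed (hullSet K) := by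
  have : hullSet K = ⋂ p : MvPolynomial (Fin n) ℂ,
      {z : Fin n → ℂ | ‖eval z p‖ ≤ ⨆ x : (K : Set (Fin n → ℂ)), ‖eval (x : Fin n → ℂ) p‖} := by
    ext z; simp [hullSet, Set.mem_iInter]
  rw [this]
  exact isClosed_iInter fun p =>
    isClosed_le ((MvPolynomial.continuous_eval p).norm) continuous_const

lemma isCompact_hull (K : NonemptyCompacts (Fin n → ℂ)) : IsCompact (hullSet K) := by
  haveI : Nonempty (K : Set (Fin n → ℂ)) := K.nonempty.to_subtype
  set S : ℝ := ⨆ x : (K : Set (Fin n → ℂ)), ‖(x : Fin n → ℂ)‖ with hS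
  have hbdd := bddAbove_aux K (fun x => ‖x‖) continuous_norm
  have hS0 : 0 ≤ S := by
    obtain ⟨x, hx⟩ := K.nonempty
    exact le_trans (norm_nonneg (x : Fin n → ℂ)) (le_ciSup hbdd ⟨x, hx⟩)
  have hsub : hullSet K ⊆ closedBall 0 S := by
    intro z hz
    rw [mem_closedBall_zero_iff]
    rw [pi_norm_le_iff_of_nonneg hS0]
    intro i
    have h1 : ‖z i‖ ≤ ⨆ x : (K : Set (Fin n → ℂ)), ‖eval (x : Fin n → ℂ) (X i)‖ := by
      simpa using hz (X i)
    refine h1.trans (ciSup_le fun x => ?_)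
    calc ‖eval (x : Fin n → ℂ) (X i)‖ = ‖(x : Fin n → ℂ) i‖ := by simp
      _ ≤ ‖(x : Fin n → ℂ)‖ := norm_le_pi_norm (x : Fin n → ℂ) i
      _ ≤ S := le_ciSup hbdd x
  exact isCompact_of_isClosed_isBounded (isClosed_hull K)
    ((isBounded_closedBall).subset hsub)

lemma sup_usc (f : (Fin n → ℂ) → ℝ) (hf : Continuous f) (K : NonemptyCompacts (Fin n → ℂ))
    {ε : ℝ} (hε : 0 < ε) :
    ∃ δ > 0, ∀ K' : NonemptyCompacts (Fin n → ℂ), dist K' K < δ →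
      ∀ x ∈ (K' : Set (Fin n → ℂ)),
        f x ≤ (⨆ y : (K : Set (Fin n → ℂ)), f (y : Fin n → ℂ)) + ε := by
  set T := cthickening 1 (K : Set (Fin n → ℂ)) with hT
  have hTc : IsCompact T := K.isCompact.cthickening
  have hfu : UniformContinuousOn f T := hTc.uniformContinuousOn_of_continuous hf.continuousOn
  rw [Metric.uniformContinuousOn_iff] at hfu
  obtain ⟨δ₀, hδ₀, hδ⟩ := hfu ε hε
  refine ⟨min δ₀ 1, lt_min hδ₀ one_pos, fun K' hK' x hx => ?_⟩
  have hd : hausdorffDist (K' : Set (Fin n → ℂ)) (K : Set (Fin n → ℂ)) < min δ₀ 1 := by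
    rw [← NonemptyCompacts.dist_eq]; exact hK'
  have fin : EMetric.hausdorffEdist (K' : Set (Fin n → ℂ)) (K : Set (Fin n → ℂ)) ≠ ⊤ :=
    hausdorffEdist_ne_top_of_nonempty_of_bounded K'.nonempty K.nonempty
      K'.isCompact.isBounded K.isCompact.isBounded
  obtain ⟨y, hy, hxy⟩ := exists_dist_lt_of_hausdorffDist_lt hx hd fin
  have hxT : x ∈ T :=
    mem_cthickening_of_dist_le x y 1 _ hy (hxy.le.trans (min_le_right _ _))
  have hyT : y ∈ T := self_subset_cthickening _ hy
  have hdist : dist (f x) (f y) < ε := hδ x hxT y hyT (hxy.trans_le (min_le_left _ _))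
  rw [Real.dist_eq] at hdist
  have h1 : f x ≤ f y + ε := by
    have := (abs_lt.1 hdist).2; linarith
  have h2 : f y ≤ ⨆ y : (K : Set (Fin n → ℂ)), f (y : Fin n → ℂ) :=
    le_ciSup (bddAbove_aux K f hf) ⟨y, hy⟩
  linarith

lemma lsc_infDist (z : Fin n → ℂ) :
    LowerSemicontinuous fun K : NonemptyCompacts (Fin n → ℂ) => infDist z (hullSet K) := by
  intro K y hy
  by_contra hcon
  rw [Filter.not_eventually] at hcon
  obtain ⟨Ks, hKs, hKsy⟩ := Filter.exists_seq_forall_of_frequently hcon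
  simp only [not_lt] at hKsy
  choose w hw hwd using fun j =>
    (isCompact_hull (Ks j)).exists_infDist_eq_dist (hull_nonempty (Ks j)) z
  have hwy : ∀ j, dist z (w j) ≤ y := fun j => (hwd j) ▸ hKsy j
  have hy0 : 0 ≤ y := le_trans dist_nonneg (hwy 0)
  have hwball : ∀ j, w j ∈ closedBall z y := by
    intro j; rw [mem_closedBall, dist_comm]; exact hwy j
  obtain ⟨wlim, hwlim, φ, hφ, hconv⟩ := (isCompact_closedBall z y).tendsto_subseq hwball
  have hmem : wlim ∈ hullSet K := by
    intro p
    apply real_le_of_forall_pos_le_add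
    intro ε hε
    obtain ⟨δ, hδ, hδs⟩ := sup_usc (fun x => ‖eval x p‖)
      ((MvPolynomial.continuous_eval p).norm) K hε
    have hev : ∀ᶠ j in atTop, dist (Ks j) K < δ := by
      have := hKs (Metric.ball_mem_nhds K hδ)
      simpa [Metric.mem_ball] using this
    have hev2 : ∀ᶠ j in atTop,
        ‖eval (w j) p‖ ≤ (⨆ x : (K : Set (Fin n → ℂ)), ‖eval (x : Fin n → ℂ) p‖) + ε := by
      refine hev.mono fun j hj => ?_
      haveI : Nonempty ((Ks j : Set (Fin n → ℂ))) := (Ks j).nonempty.to_subtype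
      exact (hw j p).trans (ciSup_le fun x => hδs (Ks j) hj x x.2)
    have hev3 : ∀ᶠ j in atTop,
        ‖eval (w (φ j)) p‖ ≤ (⨆ x : (K : Set (Fin n → ℂ)), ‖eval (x : Fin n → ℂ) p‖) + ε :=
      (hφ.tendsto_atTop).eventually hev2
    have hlim : Tendsto (fun j => ‖eval (w (φ j)) p‖) atTop (𝓝 ‖eval wlim p‖) :=
      (((MvPolynomial.continuous_eval p).norm).tendsto wlim).comp hconv
    exact le_of_tendsto hlim hev3
  have h1 : infDist z (hullSet K) ≤ dist z wlim := infDist_le_dist_of_mem hmem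
  have hzw : dist z wlim ≤ y := by
    have hl : Tendsto (fun j => dist z (w (φ j))) atTop (𝓝 (dist z wlim)) :=
      Tendsto.dist tendsto_const_nhds hconv
    exact le_of_tendsto hl (Filter.Eventually.of_forall fun j => hwy (φ j))
  exact lt_irrefl y (lt_of_lt_of_le hy (le_trans h1 hzw))

end Hull

end PolyHullAux

open PolyHullAux

/-- Corollary `map P-hull measurable` of the paper. The polynomially
convex hull mapping on `𝒦′(ℂⁿ)` is measurable: there is a Borel measurable map
`H : 𝒦′(ℂⁿ) → 𝒦′(ℂⁿ)` such that for every nonempty compact `K ⊆ ℂⁿ`, `H K` equals, as a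
set, the polynomially convex hull
`K̂ = { z : |p z| ≤ sup_{x ∈ K} |p x| for every polynomial p }`. -/
theorem polyHull_map_measurable {n : ℕ}
    [MeasurableSpace (NonemptyCompacts (Fin n → ℂ))]
    [BorelSpace (NonemptyCompacts (Fin n → ℂ))] :
    ∃ H : NonemptyCompacts (Fin n → ℂ) → NonemptyCompacts (Fin n → ℂ),
      Measurable H ∧
      ∀ K : NonemptyCompacts (Fin n → ℂ), (H K : Set (Fin n → ℂ)) =
        {z : Fin n → ℂ | ∀ p : MvPolynomial (Fin n) ℂ,
          ‖eval z p‖ ≤ ⨆ x : (K : Set (Fin n → ℂ)), ‖eval (x : Fin n → ℂ) p‖} := by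
  refine ⟨fun K => ⟨⟨hullSet K, isCompact_hull K⟩, hull_nonempty K⟩, ?_, fun K => rfl⟩
  apply measurable_of_infDist
  intro z
  exact (lsc_infDist z).measurable
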